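/- Let T : ℝ₊^N → ℝ₊₊^N be a positive concave mapping whose lower bounding matrix M satisfies ρ(M) < 1, and let T_A(x) := (I − M)⁻¹·(T(x) − M·x) be its accelerated mapping. Let u ∈ ℝ₊^N and define the sequence x″_{n+1} := T_A(x″_n) with x″_1 = u. If T(u) ≥ u componentwise (so that the sequence x′_{n+1} := T(x′_n), x′_1 = u, is monotonically increasing in each component), then the sequence (x″_n) is monotonically increasing in each component; analogously, if T(u) ≤ u componentwise, then (x″_n) is monotonically decreasing in each component. -/

import Mathlib

open Matrix Filter Topology
open scoped Pointwise

attribute [local instance] Matrix.linftyOpNormedRing Matrix.linftyOpNormedAlgebra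

noncomputable section

/-- `g` is a supergradient of `f` at `x`: the supergradient inequality holds for all
points `y` in the nonnegative orthant. -/
def IsSupergrad {N : ℕ} (f : (Fin N → ℝ) → ℝ) (x g : Fin N → ℝ) : Prop :=
  ∀ y : Fin N → ℝ, 0 ≤ y → f y ≤ f x + ∑ i, g i * (y i - x i)

/-- `M` is the lower bounding matrix of the positive concave mapping with components `f i`:
`M i k` is the infimum of the `k`-th components of all supergradients of `f i` at points of
the nonnegative orthant. -/
def IsLBM {N : ℕ} (f : Fin N → (Fin N → ℝ) → ℝ) (M : Matrix (Fin N) (Fin N) ℝ) : Prop :=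
  ∀ i k, M i k =
    sInf {t : ℝ | ∃ x : Fin N → ℝ, 0 ≤ x ∧ ∃ g : Fin N → ℝ, IsSupergrad (f i) x g ∧ g k = t}

/-- The spectral radius of a real matrix: the supremum of the moduli of its complex
eigenvalues. -/
def specRad {N : ℕ} (M : Matrix (Fin N) (Fin N) ℝ) : ENNReal :=
  spectralRadius ℂ (M.map (algebraMap ℝ ℂ))

-- entry bound
lemma entry_le_norm (A : Matrix (Fin N) (Fin N) ℂ) (i j : Fin N) : ‖A i j‖ ≤ ‖A‖ := by
  have h1 : ‖A i j‖₊ ≤ ∑ k, ‖A i k‖₊ := Finset.single_le_sum (f := fun k => ‖A i k‖₊)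
    (fun _ _ => zero_le) (Finset.mem_univ j)
  have h2 : (∑ k, ‖A i k‖₊) ≤ ‖A‖₊ := by
    rw [Matrix.linfty_opNNNorm_def]
    exact Finset.le_sup (f := fun i : Fin N => ∑ j, ‖A i j‖₊) (Finset.mem_univ i)
  exact_mod_cast h1.trans h2

-- M^n entries tend to 0
lemma pow_entries_tendsto_zero (M : Matrix (Fin N) (Fin N) ℝ) (hrad : specRad M < 1)
    (i j : Fin N) : Tendsto (fun n : ℕ => (M ^ n) i j) atTop (𝓝 0) := by
  haveI : CompleteSpace (Matrix (Fin N) (Fin N) ℂ) := FiniteDimensional.complete ℝ _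
  set A : Matrix (Fin N) (Fin N) ℂ := M.map (algebraMap ℝ ℂ) with hA
  have hgel := spectrum.pow_nnnorm_pow_one_div_tendsto_nhds_spectralRadius A
  obtain ⟨r, hr1, hr2⟩ := exists_between hrad
  have hrtop : r ≠ ⊤ := (hr2.trans_le le_top).ne
  have hev : ∀ᶠ n : ℕ in atTop, (‖A ^ n‖₊ : ENNReal) ^ (1 / (n:ℝ)) < r :=
    hgel.eventually_lt_const hr1
  have hnorm : ∀ᶠ n : ℕ in atTop, ‖A ^ n‖ ≤ (r.toReal) ^ n := by
    filter_upwards [hev, eventually_gt_atTop 0] with n hn hn0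
    have hnR : (0:ℝ) < (n:ℝ) := by exact_mod_cast hn0
    have h2 := ENNReal.rpow_le_rpow hn.le hnR.le
    rw [← ENNReal.rpow_mul, one_div, inv_mul_cancel₀ hnR.ne', ENNReal.rpow_one,
      ENNReal.rpow_natCast] at h2
    have h3 := ENNReal.toReal_mono (by simp [ENNReal.pow_ne_top hrtop]) h2
    rw [ENNReal.coe_toReal, coe_nnnorm, ENNReal.toReal_pow] at h3
    exact h3
  have hAn : Tendsto (fun n : ℕ => ‖A ^ n‖) atTop (𝓝 0) := by
    have hr2' : r.toReal < 1 := by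
      have := ENNReal.toReal_lt_toReal hrtop (by norm_num : (1:ENNReal) ≠ ⊤)
      simpa using this.mpr hr2
    have hgeo : Tendsto (fun n : ℕ => (r.toReal) ^ n) atTop (𝓝 0) :=
      tendsto_pow_atTop_nhds_zero_of_lt_one ENNReal.toReal_nonneg hr2'
    exact squeeze_zero_norm' (by filter_upwards [hnorm] with n h using by simpa using h) hgeo
  have hmap : ∀ n : ℕ, A ^ n = (M ^ n).map (algebraMap ℝ ℂ) := by
    intro n
    rw [hA, ← RingHom.mapMatrix_apply, ← RingHom.mapMatrix_apply, map_pow]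
  refine squeeze_zero_norm (fun n => ?_) hAn
  have : ‖(A ^ n) i j‖ = |(M ^ n) i j| := by
    rw [hmap n]; simp [Matrix.map_apply, Complex.norm_real]
  rw [Real.norm_eq_abs, ← this]
  exact entry_le_norm _ i j

lemma isUnit_det_one_sub (M : Matrix (Fin N) (Fin N) ℝ) (hrad : specRad M < 1) :
    IsUnit (1 - M).det := by
  haveI : CompleteSpace (Matrix (Fin N) (Fin N) ℂ) := FiniteDimensional.complete ℝ _
  set A : Matrix (Fin N) (Fin N) ℂ := M.map (algebraMap ℝ ℂ) with hA
  have h1 : (1 : ℂ) ∈ resolventSet ℂ A := by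
    apply spectrum.mem_resolventSet_of_spectralRadius_lt
    rw [show specRad M = spectralRadius ℂ A from rfl] at hrad
    simpa using hrad
  have h2 : IsUnit (1 - A) := by simpa [spectrum.mem_resolventSet_iff] using h1
  rw [Matrix.isUnit_iff_isUnit_det] at h2
  have h3 : (1 - A) = (RingHom.mapMatrix (algebraMap ℝ ℂ)) (1 - M) := by
    rw [map_sub, _root_.map_one, RingHom.mapMatrix_apply, hA]
  rw [h3, ← RingHom.map_det] at h2
  have : (1 - M).det ≠ 0 := by
    intro h
    rw [h, map_zero] at h2
    exact (by simpa using h2 : False)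
  exact isUnit_iff_ne_zero.mpr this

lemma pow_entry_nonneg (M : Matrix (Fin N) (Fin N) ℝ) (hM : ∀ i j, 0 ≤ M i j) (n : ℕ) :
    ∀ i j, 0 ≤ (M ^ n) i j := by
  induction n with
  | zero => intro i j; by_cases h : i = j <;> simp [h, Matrix.one_apply]
  | succ n ih =>
    intro i j
    rw [pow_succ, Matrix.mul_apply]
    exact Finset.sum_nonneg fun k _ => mul_nonneg (ih i k) (hM k j)

lemma inv_one_sub_nonneg (M : Matrix (Fin N) (Fin N) ℝ) (hM : ∀ i j, 0 ≤ M i j)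
    (hrad : specRad M < 1) : ∀ i j, 0 ≤ (1 - M)⁻¹ i j := by
  intro i j
  set B := (1 - M)⁻¹ with hB
  have hdet := isUnit_det_one_sub M hrad
  have hmul : (1 - M) * B = 1 := Matrix.mul_nonsing_inv _ hdet
  have key : ∀ n : ℕ, B i j = (∑ k ∈ Finset.range n, M ^ k) i j + (M ^ n * B) i j := by
    intro n
    have h1 : (∑ k ∈ Finset.range n, M ^ k) * (1 - M) = 1 - M ^ n := by
      have := geom_sum_mul M n
      rw [mul_sub, mul_one] at this ⊢
      rw [← neg_sub ((∑ k ∈ Finset.range n, M ^ k) * M) (∑ k ∈ Finset.range n, M ^ k), this,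
        neg_sub]
    have h3 : (∑ k ∈ Finset.range n, M ^ k) * ((1 - M) * B) = (1 - M ^ n) * B := by
      rw [← Matrix.mul_assoc, h1]
    rw [hmul, Matrix.mul_one, sub_mul, Matrix.one_mul] at h3
    have := congrArg (fun C : Matrix (Fin N) (Fin N) ℝ => C i j) h3
    simp only [Matrix.sub_apply] at this
    linarith
  have hlim : Tendsto (fun n : ℕ => (M ^ n * B) i j) atTop (𝓝 0) := by
    have he : ∀ n : ℕ, (M ^ n * B) i j = ∑ k, (M ^ n) i k * B k j := fun n => Matrix.mul_apply
    simp only [he]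
    have : Tendsto (fun n : ℕ => ∑ k, (M ^ n) i k * B k j) atTop (𝓝 (∑ k : Fin N, 0)) := by
      apply tendsto_finset_sum
      intro k _
      simpa using (pow_entries_tendsto_zero M hrad i k).mul_const (B k j)
    simpa using this
  have : Tendsto (fun n : ℕ => B i j - (M ^ n * B) i j) atTop (𝓝 (B i j - 0)) :=
    tendsto_const_nhds.sub hlim
  rw [sub_zero] at this
  refine ge_of_tendsto this ?_
  filter_upwards with n
  have := key n
  have hS : 0 ≤ (∑ k ∈ Finset.range n, M ^ k) i j := by
    rw [Matrix.sum_apply]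
    exact Finset.sum_nonneg fun k _ => pow_entry_nonneg M hM k i j
  linarith [key n]

variable {N : ℕ}

lemma convex_orthant : Convex ℝ {x : Fin N → ℝ | 0 ≤ x} := by
  intro x hx y hy a b ha hb hab
  intro i
  have := add_nonneg (mul_nonneg ha (hx i)) (mul_nonneg hb (hy i))
  simpa using this

lemma exists_small {z : Fin N → ℝ} (hz : ∀ j, 0 < z j) (d : Fin N → ℝ) :
    ∃ t : ℝ, 0 < t ∧ 0 ≤ z + t • d := by
  set Ss := ∑ j, |d j| / z j with hSs
  have hS0 : 0 ≤ Ss := Finset.sum_nonneg fun j _ => div_nonneg (abs_nonneg _) (hz j).le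
  refine ⟨(1 + Ss)⁻¹, by positivity, fun j => ?_⟩
  have h1 : |d j| / z j ≤ Ss :=
    Finset.single_le_sum (f := fun j => |d j| / z j)
      (fun j _ => div_nonneg (abs_nonneg _) (hz j).le) (Finset.mem_univ j)
  have h2 : |d j| ≤ (1 + Ss) * z j := by
    rw [div_le_iff₀ (hz j)] at h1
    nlinarith [(hz j)]
  have h3 : (0:ℝ) < 1 + Ss := by positivity
  have h4 : (1 + Ss)⁻¹ * |d j| ≤ z j := by
    rw [inv_mul_le_iff₀ h3]
    linarith
  have h5 : -(|d j|) ≤ d j := neg_abs_le _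
  have := mul_le_mul_of_nonneg_left h5 (by positivity : (0:ℝ) ≤ (1+Ss)⁻¹)
  simpa using by nlinarith [h4, this]

variable {f₀ : (Fin N → ℝ) → ℝ}

lemma slopeA (hconc : ConcaveOn ℝ {x : Fin N → ℝ | 0 ≤ x} f₀) {z d : Fin N → ℝ} {t s : ℝ}
    (hz : 0 ≤ z) (ht : 0 < t) (hts : t ≤ s) (hzs : 0 ≤ z + s • d) :
    0 ≤ z + t • d ∧ (f₀ z - f₀ (z + t • d)) / t ≤ (f₀ z - f₀ (z + s • d)) / s := by
  have hs0 : 0 < s := ht.trans_le hts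
  set b : ℝ := t / s with hb'
  set a : ℝ := 1 - b with ha'
  have hb : 0 ≤ b := by positivity
  have ha : 0 ≤ a := by
    have : t / s ≤ 1 := (div_le_one hs0).mpr hts
    rw [ha', hb']; linarith
  have hab : a + b = 1 := by rw [ha']; ring
  have hbs : b * s = t := by rw [hb']; field_simp
  have hcomb : a • z + b • (z + s • d) = z + t • d := by
    funext i
    simp only [Pi.add_apply, Pi.smul_apply, smul_eq_mul]
    linear_combination (z i) * hab + (d i) * hbs
  have hmem : 0 ≤ z + t • d := by
    have := convex_orthant hz hzs ha hb hab
    rwa [hcomb] at this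
  refine ⟨hmem, ?_⟩
  have hkey : a * f₀ z + b * f₀ (z + s • d) ≤ f₀ (z + t • d) := by
    have := hconc.2 hz hzs ha hb hab
    rwa [hcomb, smul_eq_mul, smul_eq_mul] at this
  rw [div_le_div_iff₀ ht hs0]
  have h5 : (s - t) * f₀ z + t * f₀ (z + s • d) ≤ s * f₀ (z + t • d) := by
    have h6 := mul_le_mul_of_nonneg_left hkey hs0.le
    calc (s - t) * f₀ z + t * f₀ (z + s • d)
        = s * (a * f₀ z + b * f₀ (z + s • d)) := by
          rw [ha', hb']; field_simp
      _ ≤ s * f₀ (z + t • d) := h6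
  linarith

lemma slopeB (hconc : ConcaveOn ℝ {x : Fin N → ℝ | 0 ≤ x} f₀) {z d : Fin N → ℝ} {t t₀ : ℝ}
    (ht : 0 < t) (ht₀ : 0 < t₀) (h1 : 0 ≤ z + t • d) (h2 : 0 ≤ z - t₀ • d) :
    (f₀ (z - t₀ • d) - f₀ z) / t₀ ≤ (f₀ z - f₀ (z + t • d)) / t := by
  have htt : 0 < t + t₀ := by positivity
  set a : ℝ := t / (t + t₀) with ha'
  set b : ℝ := t₀ / (t + t₀) with hb'
  have ha : 0 ≤ a := by positivity
  have hb : 0 ≤ b := by positivity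
  have hab : a + b = 1 := by rw [ha', hb', ← add_div, div_self htt.ne']
  have e1 : a * t₀ = b * t := by rw [ha', hb']; field_simp
  have hcomb : a • (z - t₀ • d) + b • (z + t • d) = z := by
    funext i
    simp only [Pi.add_apply, Pi.sub_apply, Pi.smul_apply, smul_eq_mul]
    linear_combination (z i) * hab + (-(d i)) * e1
  have hkey : a * f₀ (z - t₀ • d) + b * f₀ (z + t • d) ≤ f₀ z := by
    have := hconc.2 h2 h1 ha hb hab
    rwa [hcomb, smul_eq_mul, smul_eq_mul] at this
  rw [div_le_div_iff₀ ht₀ ht]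
  have h5 : t * f₀ (z - t₀ • d) + t₀ * f₀ (z + t • d) ≤ (t + t₀) * f₀ z := by
    have h6 := mul_le_mul_of_nonneg_left hkey htt.le
    calc t * f₀ (z - t₀ • d) + t₀ * f₀ (z + t • d)
        = (t + t₀) * (a * f₀ (z - t₀ • d) + b * f₀ (z + t • d)) := by
          rw [ha', hb']; field_simp
      _ ≤ (t + t₀) * f₀ z := h6
  linarith

lemma exists_supergrad (hconc : ConcaveOn ℝ {x : Fin N → ℝ | 0 ≤ x} f₀) {z : Fin N → ℝ}
    (hz : ∀ j, 0 < z j) : ∃ g : Fin N → ℝ, IsSupergrad f₀ z g := by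
  have hzS : (0 : Fin N → ℝ) ≤ z := fun j => (hz j).le
  set Q : (Fin N → ℝ) → Set ℝ := fun d =>
    {r | ∃ t : ℝ, 0 < t ∧ 0 ≤ z + t • d ∧ r = (f₀ z - f₀ (z + t • d)) / t} with hQ
  set q : (Fin N → ℝ) → ℝ := fun d => sInf (Q d) with hq
  have hQne : ∀ d, (Q d).Nonempty := by
    intro d
    obtain ⟨t, ht, hv⟩ := exists_small hz d
    exact ⟨_, t, ht, hv, rfl⟩
  have hQbdd : ∀ d, BddBelow (Q d) := by
    intro d
    obtain ⟨t₀, ht₀, hv₀⟩ := exists_small hz (-d)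
    have hv₀' : 0 ≤ z - t₀ • d := by rwa [smul_neg, ← sub_eq_add_neg] at hv₀
    refine ⟨(f₀ (z - t₀ • d) - f₀ z) / t₀, ?_⟩
    rintro r ⟨t, ht, hv, rfl⟩
    exact slopeB hconc ht ht₀ hv hv₀'
  have hq_le : ∀ (d : Fin N → ℝ) (t : ℝ), 0 < t → 0 ≤ z + t • d →
      q d ≤ (f₀ z - f₀ (z + t • d)) / t := fun d t ht hv => csInf_le (hQbdd d) ⟨t, ht, hv, rfl⟩
  have hqhom : ∀ c : ℝ, 0 < c → ∀ d, q (c • d) = c * q d := by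
    intro c hc d
    have himg : Q (c • d) = (fun r => c * r) '' Q d := by
      ext r
      constructor
      · rintro ⟨t, ht, hv, rfl⟩
        rw [smul_smul] at hv
        refine ⟨(f₀ z - f₀ (z + (t * c) • d)) / (t * c), ⟨t * c, by positivity, hv, rfl⟩, ?_⟩
        rw [smul_smul]
        field_simp
      · rintro ⟨r', ⟨t, ht, hv, rfl⟩, rfl⟩
        refine ⟨t / c, by positivity, ?_, ?_⟩
        · rwa [smul_smul, div_mul_cancel₀ _ hc.ne']
        · rw [smul_smul, div_mul_cancel₀ _ hc.ne']
          field_simp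
    have himg2 : (fun r => c * r) '' Q d = c • Q d := by
      ext r
      simp [Set.mem_smul_set, smul_eq_mul]
    rw [hq]
    simp only
    rw [himg, himg2, Real.sInf_smul_of_nonneg hc.le, smul_eq_mul]
  have hqadd : ∀ d₁ d₂, q (d₁ + d₂) ≤ q d₁ + q d₂ := by
    intro d₁ d₂
    refine le_of_forall_pos_le_add fun ε hε => ?_
    obtain ⟨r₁, hr₁m, hr₁⟩ := Real.lt_sInf_add_pos (hQne d₁) (half_pos hε)
    obtain ⟨t₁, ht₁, hv₁, rfl⟩ := hr₁m
    obtain ⟨r₂, hr₂m, hr₂⟩ := Real.lt_sInf_add_pos (hQne d₂) (half_pos hε)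
    obtain ⟨t₂, ht₂, hv₂, rfl⟩ := hr₂m
    set s := min t₁ t₂ with hs'
    have hs : 0 < s := lt_min ht₁ ht₂
    obtain ⟨hm₁, hA₁⟩ := slopeA hconc hzS hs (min_le_left _ _) hv₁
    obtain ⟨hm₂, hA₂⟩ := slopeA hconc hzS hs (min_le_right _ _) hv₂
    have hmid : z + (s / 2) • (d₁ + d₂)
        = (1/2 : ℝ) • (z + s • d₁) + (1/2 : ℝ) • (z + s • d₂) := by
      funext i
      simp only [Pi.add_apply, Pi.smul_apply, smul_eq_mul]
      ring
    have hvmid : 0 ≤ z + (s / 2) • (d₁ + d₂) := by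
      rw [hmid]
      exact convex_orthant hm₁ hm₂ (by norm_num) (by norm_num) (by norm_num)
    have hconcmid : (1/2 : ℝ) * f₀ (z + s • d₁) + (1/2 : ℝ) * f₀ (z + s • d₂)
        ≤ f₀ (z + (s / 2) • (d₁ + d₂)) := by
      have := hconc.2 hm₁ hm₂ (by norm_num : (0:ℝ) ≤ 1/2) (by norm_num : (0:ℝ) ≤ 1/2)
        (by norm_num : (1/2 : ℝ) + 1/2 = 1)
      rw [hmid]
      simpa [smul_eq_mul] using this
    have hq0 : q (d₁ + d₂) ≤ (f₀ z - f₀ (z + (s / 2) • (d₁ + d₂))) / (s / 2) :=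
      hq_le _ _ (by positivity) hvmid
    have hP : (f₀ z - f₀ (z + (s / 2) • (d₁ + d₂))) / (s / 2)
        ≤ (f₀ z - f₀ (z + s • d₁)) / s + (f₀ z - f₀ (z + s • d₂)) / s := by
      rw [← add_div, div_le_div_iff₀ (by positivity) hs]
      nlinarith [hconcmid]
    have : q (d₁ + d₂) ≤ (f₀ z - f₀ (z + t₁ • d₁)) / t₁ + (f₀ z - f₀ (z + t₂ • d₂)) / t₂ := by
      linarith
    rw [show q d₁ = sInf (Q d₁) from rfl, show q d₂ = sInf (Q d₂) from rfl]
    linarith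
  -- Hahn-Banach
  have hq00 : q 0 = 0 := by
    have hQ0 : Q 0 = {0} := by
      ext r
      simp only [hQ, Set.mem_setOf_eq, Set.mem_singleton_iff, smul_zero, add_zero, sub_self,
        zero_div]
      constructor
      · rintro ⟨t, ht, -, rfl⟩; rfl
      · rintro rfl; exact ⟨1, one_pos, by simpa using hzS, rfl⟩
    rw [hq]; simp [hQ0]
  obtain ⟨g, -, hg⟩ := exists_extension_of_le_sublinear ⟨⊥, 0⟩ q
    (fun c hc x => hqhom c hc x) hqadd
    (by
      rintro ⟨x, hx⟩
      have hx0 : x = 0 := by simpa using hx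
      simp [hx0, hq00])
  refine ⟨fun k => -(g fun j => if k = j then 1 else 0), ?_⟩
  intro y hy
  have h1 : g (y - z) ≤ q (y - z) := hg _
  have h2 : q (y - z) ≤ (f₀ z - f₀ (z + (1 : ℝ) • (y - z))) / 1 :=
    hq_le _ 1 one_pos (by simpa using hy)
  rw [one_smul, add_sub_cancel, div_one] at h2
  have h3 : g (y - z) = ∑ k, (y k - z k) * g fun j => if k = j then 1 else 0 := by
    have := g.pi_apply_eq_sum_univ (y - z)
    simpa [smul_eq_mul] using this
  have h4 : ∑ k, (-(g fun j => if k = j then 1 else 0)) * (y k - z k) = -(g (y - z)) := by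
    rw [h3, ← Finset.sum_neg_distrib]
    exact Finset.sum_congr rfl fun k _ => by ring
  have := h1.trans h2
  linarith [h4, this]

lemma supergrad_nonneg (hpos : ∀ x : Fin N → ℝ, 0 ≤ x → 0 < f₀ x) {x g : Fin N → ℝ}
    (hx : 0 ≤ x) (hg : IsSupergrad f₀ x g) (k : Fin N) : 0 ≤ g k := by
  by_contra h
  push_neg at h
  set t : ℝ := (f₀ x + 1) / (-(g k)) with ht'
  have ht : 0 < t := div_pos (by linarith [hpos x hx]) (by linarith)
  set y : Fin N → ℝ := fun j => x j + if j = k then t else 0 with hy'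
  have hy : 0 ≤ y := by
    intro j
    have := hx j
    simp only [hy', Pi.zero_apply] at this ⊢
    split <;> linarith
  have hsum : ∑ i, g i * (y i - x i) = g k * t := by
    rw [Finset.sum_eq_single k]
    · simp [hy']
    · intro b _ hb
      simp [hy', hb]
    · intro hk; exact absurd (Finset.mem_univ k) hk
  have h2 := hg y hy
  rw [hsum] at h2
  have h3 : g k * t = -(f₀ x + 1) := by
    rw [ht']
    field_simp [h.ne]
  rw [h3] at h2
  linarith [hpos y hy]

lemma key_ineq (hconc : ConcaveOn ℝ {x : Fin N → ℝ | 0 ≤ x} f₀)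
    (husc : UpperSemicontinuousOn f₀ {x : Fin N → ℝ | 0 ≤ x})
    (m : Fin N → ℝ) (hm0 : ∀ k, 0 ≤ m k)
    (hm_le : ∀ (x g : Fin N → ℝ), 0 ≤ x → IsSupergrad f₀ x g → ∀ k, m k ≤ g k)
    {x y : Fin N → ℝ} (hx : 0 ≤ x) (hxy : x ≤ y) :
    f₀ x + ∑ k, m k * (y k - x k) ≤ f₀ y := by
  have hy : 0 ≤ y := le_trans hx hxy
  by_contra hlt
  push_neg at hlt
  set A := f₀ x + ∑ k, m k * (y k - x k) with hA
  set c := (f₀ y + A) / 2 with hc'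
  have hc1 : f₀ y < c := by rw [hc']; linarith
  have hc2 : c < A := by rw [hc']; linarith
  -- the approach path
  set φ : ℝ → (Fin N → ℝ) := fun ε => y + fun _ => ε with hφ'
  have hcont : Continuous φ := by
    apply continuous_const.add
    exact continuous_pi fun _ => continuous_id
  have htend : Tendsto φ (𝓝[>] (0:ℝ)) (𝓝[{x : Fin N → ℝ | 0 ≤ x}] y) := by
    rw [tendsto_nhdsWithin_iff]
    constructor
    · have := hcont.tendsto 0
      have h0 : φ 0 = y := by funext j; simp [hφ']
      rw [h0] at this
      exact this.mono_left nhdsWithin_le_nhds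
    · filter_upwards [self_mem_nhdsWithin] with ε (hε : 0 < ε)
      intro j
      simp only [hφ', Pi.add_apply]
      have := hy j
      simp only [Pi.zero_apply] at this ⊢
      linarith
  have hev : ∀ᶠ ε in 𝓝[>] (0:ℝ), f₀ (φ ε) < c := htend.eventually (husc y hy c hc1)
  obtain ⟨ε, hfc, hε⟩ := (hev.and self_mem_nhdsWithin).exists
  have hε : 0 < ε := hε
  set z := φ ε with hz'
  have hzpos : ∀ j, 0 < z j := fun j => by
    have := hy j
    simp only [hz', hφ', Pi.add_apply, Pi.zero_apply] at this ⊢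
    linarith
  obtain ⟨g, hgz⟩ := exists_supergrad hconc hzpos
  have h1 := hgz x hx
  have h2 : ∑ k, g k * (x k - z k) ≤ -∑ k, m k * (z k - x k) := by
    rw [← Finset.sum_neg_distrib]
    apply Finset.sum_le_sum
    intro k _
    have hzk : 0 ≤ z k - x k := by
      have h3 := hxy k
      simp only [hz', hφ', Pi.add_apply]
      linarith
    have h4 := hm_le z g (fun j => (hzpos j).le) hgz k
    nlinarith
  have h5 : ∑ k, m k * (y k - x k) ≤ ∑ k, m k * (z k - x k) := by
    apply Finset.sum_le_sum
    intro k _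
    have : z k = y k + ε := by simp [hz', hφ']
    nlinarith [hm0 k]
  have := h1
  linarith [hgz x hx, h2, h5, hfc]


/-- If the standard iterates of T from u are monotone (i.e. T(u) ≥ u, resp. T(u) ≤ u),
then the iterates of the accelerated mapping from u are monotone in the same sense. -/
theorem accelerated_iterates_monotone {N : ℕ} (f : Fin N → (Fin N → ℝ) → ℝ)
    (hconc : ∀ i, ConcaveOn ℝ {x : Fin N → ℝ | 0 ≤ x} (f i))
    (husc : ∀ i, UpperSemicontinuousOn (f i) {x : Fin N → ℝ | 0 ≤ x})
    (hpos : ∀ i, ∀ x : Fin N → ℝ, 0 ≤ x → 0 < f i x)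
    (M : Matrix (Fin N) (Fin N) ℝ) (hM : IsLBM f M)
    (hrad : specRad M < 1)
    (TA : (Fin N → ℝ) → (Fin N → ℝ))
    (hTA : ∀ x : Fin N → ℝ, TA x = (1 - M)⁻¹ *ᵥ ((fun i => f i x) - M *ᵥ x))
    (u : Fin N → ℝ) (hu : 0 ≤ u)
    (xq : ℕ → Fin N → ℝ) (hq0 : xq 0 = u) (hqrec : ∀ n, xq (n + 1) = TA (xq n)) :
    ((u ≤ fun i => f i u) → ∀ n, xq n ≤ xq (n + 1)) ∧
    (((fun i => f i u) ≤ u) → ∀ n, xq (n + 1) ≤ xq n) := by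
  have hm0 : ∀ i k, 0 ≤ M i k := by
    intro i k
    rw [hM i k]
    apply Real.sInf_nonneg
    rintro t ⟨x, hx, g, hsg, rfl⟩
    exact supergrad_nonneg (hpos i) hx hsg k
  have hm_le : ∀ i (x g : Fin N → ℝ), 0 ≤ x → IsSupergrad (f i) x g → ∀ k, M i k ≤ g k := by
    intro i x g hx hsg k
    rw [hM i k]
    apply csInf_le
    · exact ⟨0, by rintro t ⟨x', hx', g', hsg', rfl⟩; exact supergrad_nonneg (hpos i) hx' hsg' k⟩
    · exact ⟨x, hx, g, hsg, rfl⟩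
  have hkey : ∀ (i : Fin N) {x y : Fin N → ℝ}, 0 ≤ x → x ≤ y →
      f i x + ∑ k, M i k * (y k - x k) ≤ f i y := fun i {x y} hx hxy =>
    key_ineq (hconc i) (husc i) (fun k => M i k) (hm0 i) (hm_le i) hx hxy
  set B := (1 - M)⁻¹ with hB
  have hdet := isUnit_det_one_sub M hrad
  have hBpos : ∀ i j, 0 ≤ B i j := inv_one_sub_nonneg M (fun i j => hm0 i j) hrad
  have hBmul : B * (1 - M) = 1 := Matrix.nonsing_inv_mul _ hdet
  have hBv : ∀ v : Fin N → ℝ, 0 ≤ v → 0 ≤ B *ᵥ v := by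
    intro v hv i
    simp only [Matrix.mulVec, dotProduct, Pi.zero_apply]
    exact Finset.sum_nonneg fun k _ => mul_nonneg (hBpos i k) (hv k)
  have hBvne : ∀ v : Fin N → ℝ, v ≤ 0 → B *ᵥ v ≤ 0 := by
    intro v hv i
    simp only [Matrix.mulVec, dotProduct, Pi.zero_apply]
    apply Finset.sum_nonpos
    intro k _
    have := mul_le_mul_of_nonneg_left (hv k) (hBpos i k)
    simpa using this
  have hTAsub : ∀ x : Fin N → ℝ, TA x - x = B *ᵥ ((fun i => f i x) - x) := by
    intro x
    rw [hTA x]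
    have h1 : x = B *ᵥ ((1 - M) *ᵥ x) := by
      rw [Matrix.mulVec_mulVec, hBmul, Matrix.one_mulVec]
    calc (B *ᵥ ((fun i => f i x) - M *ᵥ x)) - x
        = B *ᵥ ((fun i => f i x) - M *ᵥ x) - B *ᵥ ((1 - M) *ᵥ x) := by rw [← h1]
      _ = B *ᵥ (((fun i => f i x) - M *ᵥ x) - ((1 - M) *ᵥ x)) :=
          (Matrix.mulVec_sub B _ _).symm
      _ = B *ᵥ ((fun i => f i x) - x) := by
          congr 1
          rw [Matrix.sub_mulVec, Matrix.one_mulVec]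
          abel
  have hTApos : ∀ x : Fin N → ℝ, 0 ≤ x → 0 ≤ TA x := by
    intro x hx
    rw [hTA x]
    apply hBv
    intro i
    have h1 := hkey i (le_refl (0 : Fin N → ℝ)) hx
    have h2 : (M *ᵥ x) i = ∑ k, M i k * (x k - (0 : Fin N → ℝ) k) := by
      simp [Matrix.mulVec, dotProduct]
    have h3 := hpos i 0 le_rfl
    simp only [Pi.sub_apply, Pi.zero_apply]
    rw [h2]
    linarith
  have hTAmono : ∀ a b : Fin N → ℝ, 0 ≤ a → a ≤ b → TA a ≤ TA b := by
    intro a b ha hab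
    have hdiff : 0 ≤ TA b - TA a := by
      rw [hTA a, hTA b, ← Matrix.mulVec_sub]
      apply hBv
      intro i
      have h1 := hkey i ha hab
      have h2 : (M *ᵥ b) i - (M *ᵥ a) i = ∑ k, M i k * (b k - a k) := by
        simp [Matrix.mulVec, dotProduct, mul_sub, Finset.sum_sub_distrib]
      simp only [Pi.sub_apply, Pi.zero_apply]
      linarith
    exact sub_nonneg.mp hdiff
  constructor
  · intro hinc n
    have main : ∀ n, 0 ≤ xq n ∧ xq n ≤ xq (n + 1) := by
      intro n
      induction n with
      | zero =>
        refine ⟨by rw [hq0]; exact hu, ?_⟩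
        rw [hqrec 0, hq0]
        have h1 : 0 ≤ TA u - u := by
          rw [hTAsub u]
          exact hBv _ (sub_nonneg.mpr hinc)
        exact sub_nonneg.mp h1
      | succ n ih =>
        obtain ⟨h0, hmon⟩ := ih
        refine ⟨le_trans h0 hmon, ?_⟩
        have h2 := hTAmono _ _ h0 hmon
        rw [← hqrec n, ← hqrec (n + 1)] at h2
        exact h2
    exact (main n).2
  · intro hdec n
    have main : ∀ n, 0 ≤ xq (n + 1) ∧ xq (n + 1) ≤ xq n := by
      intro n
      induction n with
      | zero =>
        refine ⟨by rw [hqrec 0, hq0]; exact hTApos u hu, ?_⟩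
        rw [hqrec 0, hq0]
        have h1 : TA u - u ≤ 0 := by
          rw [hTAsub u]
          exact hBvne _ (sub_nonpos.mpr hdec)
        exact sub_nonpos.mp h1
      | succ n ih =>
        obtain ⟨h0, hmon⟩ := ih
        refine ⟨by rw [hqrec (n + 1)]; exact hTApos _ h0, ?_⟩
        have h2 := hTAmono _ _ h0 hmon
        rw [← hqrec (n + 1), ← hqrec n] at h2
        exact h2
    exact (main n).2
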